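/- Assume D is nonexpansive (λ = 1) and 0 < γ ≤ 1/(L+2τ). Then for every x ∈ E and every x* ∈ E with G(x*) = 0, ‖x − γ·G(x) − x*‖² ≤ ‖x − x*‖² − (γ/(L+2τ))·‖G(x)‖². -/

import Mathlib

open InnerProductSpace Set

local notation "⟪" x ", " y "⟫" => @inner ℝ _ _ x y

section aux
variable {F : Type*} [NormedAddCommGroup F] [InnerProductSpace ℝ F] [CompleteSpace F]

lemma line_hasDerivAt (f : F → ℝ) (f' : F → F) (hf : ∀ x, HasGradientAt f (f' x) x)
    (x v : F) (t : ℝ) :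
    HasDerivAt (fun s : ℝ => f (s • v + x)) ⟪f' (t • v + x), v⟫ t := by
  have h1 : HasDerivAt (fun s : ℝ => s • v + x) v t := by
    simpa using ((hasDerivAt_id t).smul_const v).add_const x
  have h2 := (hf (t • v + x)).hasFDerivAt.comp_hasDerivAt t h1
  exact h2

lemma grad_lower (f : F → ℝ) (f' : F → F) (hconv : ConvexOn ℝ univ f)
    (hf : ∀ x, HasGradientAt f (f' x) x) (x y : F) :
    f x + ⟪f' x, y - x⟫ ≤ f y := by
  set v := y - x with hv
  have hφ : ConvexOn ℝ univ (fun t : ℝ => f (t • v + x)) := by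
    have h := hconv.comp_affineMap (AffineMap.lineMap x y)
    have : (f ∘ (AffineMap.lineMap x y)) = fun t : ℝ => f (t • v + x) := by
      funext t
      simp only [Function.comp_apply, AffineMap.lineMap_apply_module, hv]
      congr 1
      module
    rw [this] at h
    simpa using h
  have hd : HasDerivAt (fun t : ℝ => f (t • v + x)) ⟪f' x, v⟫ 0 := by
    have := line_hasDerivAt f f' hf x v 0
    simpa using this
  have hs := hφ.le_slope_of_hasDerivAt (mem_univ (0:ℝ)) (mem_univ (1:ℝ)) one_pos hd
  have hslope : slope (fun t : ℝ => f (t • v + x)) 0 1 = f y - f x := by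
    rw [slope_def_field]
    simp [hv]
  rw [hslope] at hs
  linarith

lemma descent (f : F → ℝ) (f' : F → F) (L : ℝ) (hL : 0 < L)
    (hf : ∀ x, HasGradientAt f (f' x) x)
    (hLip : ∀ x y, ‖f' x - f' y‖ ≤ L * ‖x - y‖) (x y : F) :
    f y ≤ f x + ⟪f' x, y - x⟫ + L / 2 * ‖y - x‖ ^ 2 := by
  set v := y - x with hv
  set ψ : ℝ → ℝ := fun t => f (t • v + x) - t * ⟪f' x, v⟫ - L * t ^ 2 / 2 * ‖v‖ ^ 2 with hψ
  have hd : ∀ t : ℝ, HasDerivAt ψ (⟪f' (t • v + x) - f' x, v⟫ - L * t * ‖v‖ ^ 2) t := by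
    intro t
    have h1 := line_hasDerivAt f f' hf x v t
    have h2 : HasDerivAt (fun t : ℝ => t * ⟪f' x, v⟫) ⟪f' x, v⟫ t := by
      simpa using (hasDerivAt_id t).mul_const (⟪f' x, v⟫)
    have h3 : HasDerivAt (fun t : ℝ => L * t ^ 2 / 2 * ‖v‖ ^ 2) (L * t * ‖v‖ ^ 2) t := by
      have := ((hasDerivAt_pow 2 t).const_mul L).div_const 2
      have h4 := this.mul_const (‖v‖ ^ 2)
      exact h4.congr_deriv (by push_cast; ring)
    have h5 := (h1.sub h2).sub h3
    exact h5.congr_deriv (by rw [inner_sub_left])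
  have hanti : AntitoneOn ψ (Icc (0:ℝ) 1) := by
    apply antitoneOn_of_deriv_nonpos (convex_Icc 0 1)
    · exact fun t _ => (hd t).continuousAt.continuousWithinAt
    · exact fun t _ => (hd t).differentiableAt.differentiableWithinAt
    · intro t ht
      rw [interior_Icc] at ht
      rw [(hd t).deriv]
      have h6 : ⟪f' (t • v + x) - f' x, v⟫ ≤ L * t * ‖v‖ ^ 2 := by
        have hcs := real_inner_le_norm (f' (t • v + x) - f' x) v
        have hlip := hLip (t • v + x) x
        have hnorm : ‖t • v + x - x‖ = t * ‖v‖ := by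
          rw [add_sub_cancel_right, norm_smul, Real.norm_eq_abs, abs_of_pos ht.1]
        rw [hnorm] at hlip
        nlinarith [norm_nonneg v, norm_nonneg (f' (t • v + x) - f' x)]
      linarith
  have h7 := hanti (by simp : (0:ℝ) ∈ Icc (0:ℝ) 1) (by simp : (1:ℝ) ∈ Icc (0:ℝ) 1) zero_le_one
  have h8 : (1:ℝ) • v + x = y := by rw [one_smul, hv]; abel
  have h9 : (0:ℝ) • v + x = x := by rw [zero_smul, zero_add]
  simp only [hψ] at h7
  rw [h8, h9] at h7
  norm_num at h7
  linarith


lemma bh_bound (f : F → ℝ) (f' : F → F) (L : ℝ) (hL : 0 < L)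
    (hconv : ConvexOn ℝ univ f) (hf : ∀ x, HasGradientAt f (f' x) x)
    (hLip : ∀ x y, ‖f' x - f' y‖ ≤ L * ‖x - y‖) (x y : F) :
    f x + ⟪f' x, y - x⟫ + 1 / (2 * L) * ‖f' y - f' x‖ ^ 2 ≤ f y := by
  set h : F → ℝ := fun z => f z - ⟪f' x, z⟫ with hhdef
  set h' : F → F := fun z => f' z - f' x with hh'def
  have hgrad : ∀ z, HasGradientAt h (h' z) z := by
    intro z
    have h2 : HasFDerivAt h (toDual ℝ F (f' z) - toDual ℝ F (f' x)) z :=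
      (hf z).hasFDerivAt.sub ((toDual ℝ F (f' x)).hasFDerivAt)
    rw [← map_sub] at h2
    simpa using h2.hasGradientAt
  have hconv' : ConvexOn ℝ univ h := by
    have hlin : ConvexOn ℝ (univ : Set F) (fun z : F => -⟪f' x, z⟫) := by
      refine ⟨convex_univ, fun a _ b _ s t hs ht hst => ?_⟩
      simp only [inner_add_right, real_inner_smul_right, smul_eq_mul]
      exact le_of_eq (by ring)
    have hsum := hconv.add hlin
    have hfun : (f + fun z : F => -⟪f' x, z⟫) = h := by
      funext z
      simp [hhdef, sub_eq_add_neg]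
    rwa [hfun] at hsum
  have hLip' : ∀ a b, ‖h' a - h' b‖ ≤ L * ‖a - b‖ := by
    intro a b
    have : h' a - h' b = f' a - f' b := by simp only [hh'def]; abel
    rw [this]; exact hLip a b
  have hmin : ∀ z, h x ≤ h z := by
    intro z
    have := grad_lower h h' hconv' hgrad x z
    have hx0 : h' x = 0 := by simp [hh'def]
    rw [hx0] at this
    simpa using this
  have hstep := descent h h' L hL hgrad hLip' y (y - (1 / L) • h' y)
  have hmin' := hmin (y - (1 / L) • h' y)
  have e1 : ⟪h' y, y - (1 / L) • h' y - y⟫ = -(1 / L) * ‖h' y‖ ^ 2 := by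
    have : y - (1 / L) • h' y - y = -((1 / L) • h' y) := by abel
    rw [this, inner_neg_right, real_inner_smul_right, real_inner_self_eq_norm_sq]
    ring
  have e2 : ‖y - (1 / L) • h' y - y‖ ^ 2 = (1 / L) ^ 2 * ‖h' y‖ ^ 2 := by
    have : y - (1 / L) • h' y - y = -((1 / L) • h' y) := by abel
    rw [this, norm_neg, norm_smul, mul_pow, Real.norm_eq_abs, sq_abs]
  rw [e1, e2] at hstep
  have key : h x ≤ h y - 1 / (2 * L) * ‖h' y‖ ^ 2 := by
    have hL' : L ≠ 0 := ne_of_gt hL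
    have : L / 2 * ((1 / L) ^ 2 * ‖h' y‖ ^ 2) = 1 / (2 * L) * ‖h' y‖ ^ 2 := by
      field_simp
    have h2L : (1:ℝ) / L * ‖h' y‖ ^ 2 = 2 * (1 / (2 * L) * ‖h' y‖ ^ 2) := by
      field_simp
    linarith [hmin', hstep, this, h2L]
  have hy' : ‖h' y‖ = ‖f' y - f' x‖ := by simp [hh'def]
  have hix : ⟪f' x, y - x⟫ = ⟪f' x, y⟫ - ⟪f' x, x⟫ := inner_sub_right _ _ _
  simp only [hhdef, hy'] at key
  linarith

lemma coco (f : F → ℝ) (f' : F → F) (L : ℝ) (hL : 0 < L)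
    (hconv : ConvexOn ℝ univ f) (hf : ∀ x, HasGradientAt f (f' x) x)
    (hLip : ∀ x y, ‖f' x - f' y‖ ≤ L * ‖x - y‖) (x y : F) :
    1 / L * ‖f' x - f' y‖ ^ 2 ≤ ⟪f' x - f' y, x - y⟫ := by
  have h1 := bh_bound f f' L hL hconv hf hLip x y
  have h2 := bh_bound f f' L hL hconv hf hLip y x
  have e1 : ⟪f' x, y - x⟫ + ⟪f' y, x - y⟫ = -⟪f' x - f' y, x - y⟫ := by
    rw [inner_sub_left]
    simp only [inner_sub_right]
    ring
  have hn : ‖f' y - f' x‖ = ‖f' x - f' y‖ := norm_sub_rev _ _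
  rw [hn] at h1
  have h2L : (1:ℝ) / L * ‖f' x - f' y‖ ^ 2 = 2 * (1 / (2 * L) * ‖f' x - f' y‖ ^ 2) := by
    field_simp
  linarith

end aux

set_option maxHeartbeats 1000000 in
/-- Proposition 2: for a nonexpansive prior and `0 < γ ≤ 1/(L+2τ)`, a gradient-type
step on `G` contracts towards any zero of `G`. -/
theorem G_step_fejer {n : ℕ}
    (g : EuclideanSpace ℝ (Fin n) → ℝ)
    (g' D G : EuclideanSpace ℝ (Fin n) → EuclideanSpace ℝ (Fin n))
    (L τ γ : ℝ)
    (hL : 0 < L)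
    (hgconv : ConvexOn ℝ Set.univ g)
    (hgrad : ∀ x, HasGradientAt g (g' x) x)
    (hgLip : ∀ x y, ‖g' x - g' y‖ ≤ L * ‖x - y‖)
    (hD : ∀ x y, ‖D x - D y‖ ≤ ‖x - y‖)
    (hτ : 0 < τ)
    (hG : ∀ x, G x = g' x + τ • (x - D x))
    (hγ0 : 0 < γ) (hγ : γ ≤ 1 / (L + 2 * τ)) :
    ∀ x xstar : EuclideanSpace ℝ (Fin n), G xstar = 0 →
      ‖x - γ • G x - xstar‖ ^ 2
        ≤ ‖x - xstar‖ ^ 2 - (γ / (L + 2 * τ)) * ‖G x‖ ^ 2 := by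
  intro x xstar hstar
  set u := x - xstar with hu
  set a := g' x - g' xstar with ha
  set w := (x - D x) - (xstar - D xstar) with hw
  set b := τ • w with hb
  have hLτ : 0 < L + 2 * τ := by linarith
  -- G x = a + b
  have hz : g' xstar + τ • (xstar - D xstar) = 0 := by rw [← hG]; exact hstar
  have hGx : G x = a + b := by
    have h0 : a + b = G x - (g' xstar + τ • (xstar - D xstar)) := by
      rw [hG x, ha, hb, hw]
      module
    rw [hz, sub_zero] at h0
    exact h0.symm
  -- cocoercivity of the gradient part
  have hca : 1 / L * ‖a‖ ^ 2 ≤ ⟪a, u⟫ :=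
    coco g g' L hL hgconv hgrad hgLip x xstar
  have hca' : ‖a‖ ^ 2 ≤ L * ⟪a, u⟫ := by
    have h1 : L * (1 / L * ‖a‖ ^ 2) = ‖a‖ ^ 2 := by
      field_simp
    have h2 := mul_le_mul_of_nonneg_left hca (le_of_lt hL)
    linarith
  -- half-cocoercivity of I - D
  have hcw : (1 : ℝ) / 2 * ‖w‖ ^ 2 ≤ ⟪w, u⟫ := by
    set p := D x - D xstar with hp
    have hwp : w = u - p := by rw [hw, hp, hu]; abel
    have hnp : ‖p‖ ≤ ‖u‖ := hD x xstar
    have e1 : ⟪w, u⟫ = ‖u‖ ^ 2 - ⟪p, u⟫ := by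
      rw [hwp, inner_sub_left, real_inner_self_eq_norm_sq]
    have e2 : ‖w‖ ^ 2 = ‖u‖ ^ 2 - 2 * ⟪u, p⟫ + ‖p‖ ^ 2 := by
      rw [hwp]; exact norm_sub_sq_real u p
    have e3 : ⟪p, u⟫ = ⟪u, p⟫ := real_inner_comm _ _
    nlinarith [norm_nonneg p, norm_nonneg u]
  have hcb' : ‖b‖ ^ 2 ≤ (2 * τ) * ⟪b, u⟫ := by
    have e1 : ⟪b, u⟫ = τ * ⟪w, u⟫ := real_inner_smul_left _ _ _
    have e2 : ‖b‖ ^ 2 = τ ^ 2 * ‖w‖ ^ 2 := by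
      rw [hb, norm_smul, Real.norm_eq_abs, abs_of_pos hτ, mul_pow]
    rw [e1, e2]
    nlinarith [hcw, sq_nonneg τ, mul_pos hτ hτ]
  -- combination: cocoercivity of G with constant 1/(L+2τ)
  have hkey : 1 / (L + 2 * τ) * ‖G x‖ ^ 2 ≤ ⟪G x, u⟫ := by
    have hsum : ⟪G x, u⟫ = ⟪a, u⟫ + ⟪b, u⟫ := by rw [hGx, inner_add_left]
    have htri : ‖G x‖ ≤ ‖a‖ + ‖b‖ := by rw [hGx]; exact norm_add_le a b
    have hGn : (0:ℝ) ≤ ‖G x‖ := norm_nonneg _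
    have han : (0:ℝ) ≤ ‖a‖ := norm_nonneg _
    have hbn : (0:ℝ) ≤ ‖b‖ := norm_nonneg _
    set A := ‖a‖
    set B := ‖b‖
    set α := ⟪a, u⟫
    set β := ⟪b, u⟫
    have step3 : ‖G x‖ ^ 2 ≤ (A + B) ^ 2 := pow_le_pow_left₀ hGn htri 2
    have step1 : 2 * τ * L * (A + B) ^ 2 ≤ (L + 2 * τ) * (2 * τ * A ^ 2 + L * B ^ 2) := by
      nlinarith [sq_nonneg (2 * τ * A - L * B)]
    have step2 : 2 * τ * A ^ 2 + L * B ^ 2 ≤ 2 * τ * L * (α + β) := by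
      have k1 := mul_le_mul_of_nonneg_left hca' (by linarith : (0:ℝ) ≤ 2 * τ)
      have k2 := mul_le_mul_of_nonneg_left hcb' (le_of_lt hL)
      linarith
    have hpos : (0:ℝ) < 2 * τ * L := by positivity
    have chain : ‖G x‖ ^ 2 * (2 * τ * L) ≤ (α + β) * (L + 2 * τ) * (2 * τ * L) := by
      have c1 := mul_le_mul_of_nonneg_left step3 (le_of_lt hpos)
      have c2 := mul_le_mul_of_nonneg_left step2 (le_of_lt hLτ)
      nlinarith
    have := le_of_mul_le_mul_right chain hpos
    rw [hsum]
    calc 1 / (L + 2 * τ) * ‖G x‖ ^ 2 ≤ 1 / (L + 2 * τ) * ((α + β) * (L + 2 * τ)) := by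
          apply mul_le_mul_of_nonneg_left this
          positivity
      _ = α + β := by field_simp
  -- final expansion
  have hexp : ‖x - γ • G x - xstar‖ ^ 2
      = ‖u‖ ^ 2 - 2 * (γ * ⟪u, G x⟫) + γ ^ 2 * ‖G x‖ ^ 2 := by
    have e0 : x - γ • G x - xstar = u - γ • G x := by rw [hu]; abel
    rw [e0, norm_sub_sq_real, real_inner_smul_right, norm_smul, Real.norm_eq_abs,
      abs_of_pos hγ0, mul_pow]
  rw [hexp]
  have hcomm : ⟪u, G x⟫ = ⟪G x, u⟫ := real_inner_comm _ _
  have hγ2 : γ ^ 2 ≤ γ * (1 / (L + 2 * τ)) := by nlinarith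
  have hγd : γ / (L + 2 * τ) = γ * (1 / (L + 2 * τ)) := by ring
  rw [hγd, hcomm]
  have k1 := mul_le_mul_of_nonneg_left hkey (by linarith : (0:ℝ) ≤ 2 * γ)
  have k2 := mul_le_mul_of_nonneg_right hγ2 (sq_nonneg ‖G x‖)
  nlinarith [k1, k2]
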